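/- Let A₁, A₂, B₁, B₂, C₁, C₂ be convex sets in the plane such that A₁∩A₂∩B₁∩B₂, A₁∩A₂∩C₁∩C₂ and B₁∩B₂∩C₁∩C₂ are all nonempty, and such that A₁∩B₁∩C₁ = ∅ and A₂∩B₂∩C₂ = ∅, with all six sets pairwise intersecting. Then the orientation of the triple (A₁,B₁,C₁) equals the orientation of (A₂,B₂,C₂). -/

import Mathlib

noncomputable def det2 (p q r : ℝ × ℝ) : ℝ :=
  (q.1 - p.1) * (r.2 - p.2) - (q.2 - p.2) * (r.1 - p.1)

noncomputable def ptOrient (p q r : ℝ × ℝ) : ℝ := Real.sign (det2 p q r)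

lemma rel_cases (x y z : ℝ × ℝ) (t : ℝ) (h1 : z.1 = x.1 + t * (y.1 - x.1))
    (h2 : z.2 = x.2 + t * (y.2 - x.2)) :
    x ∈ segment ℝ y z ∨ z ∈ segment ℝ x y ∨ y ∈ segment ℝ x z := by
  rcases le_or_gt t 0 with ht | ht
  · left
    have hs : (0:ℝ) < 1 - t := by linarith
    refine ⟨-t/(1-t), 1/(1-t), div_nonneg (by linarith) hs.le, by positivity, by field_simp; ring, ?_⟩
    rw [Prod.ext_iff]
    constructor
    · simp only [Prod.fst_add, Prod.smul_fst, smul_eq_mul]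
      rw [h1]; field_simp; ring
    · simp only [Prod.snd_add, Prod.smul_snd, smul_eq_mul]
      rw [h2]; field_simp; ring
  rcases le_or_gt t 1 with ht1 | ht1
  · right; left
    refine ⟨1-t, t, by linarith, ht.le, by ring, ?_⟩
    rw [Prod.ext_iff]
    constructor
    · simp only [Prod.fst_add, Prod.smul_fst, smul_eq_mul]
      rw [h1]; ring
    · simp only [Prod.snd_add, Prod.smul_snd, smul_eq_mul]
      rw [h2]; ring
  · right; right
    have ht0 : (0:ℝ) < t := by linarith
    refine ⟨1 - 1/t, 1/t, by
        rw [sub_nonneg]; exact div_le_one_of_le₀ (by linarith) ht0.le,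
      by positivity, by ring, ?_⟩
    rw [Prod.ext_iff]
    constructor
    · simp only [Prod.fst_add, Prod.smul_fst, smul_eq_mul]
      rw [h1]; field_simp; ring
    · simp only [Prod.snd_add, Prod.smul_snd, smul_eq_mul]
      rw [h2]; field_simp; ring

lemma det2_ne_zero {A B C : Set (ℝ × ℝ)} (hA : Convex ℝ A) (hB : Convex ℝ B)
    (hC : Convex ℝ C) (he : A ∩ B ∩ C = ∅) {x y z : ℝ × ℝ}
    (hx : x ∈ B ∩ C) (hy : y ∈ A ∩ C) (hz : z ∈ A ∩ B) : det2 x y z ≠ 0 := by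
  intro h0
  have hdet : (y.1 - x.1) * (z.2 - x.2) - (y.2 - x.2) * (z.1 - x.1) = 0 := h0
  have hcases : x ∈ segment ℝ y z ∨ z ∈ segment ℝ x y ∨ y ∈ segment ℝ x z := by
    by_cases hu1 : y.1 - x.1 = 0
    · by_cases hu2 : y.2 - x.2 = 0
      · -- y = x, use second form with t = 0 : y = x + 0 • (z - x)
        rcases rel_cases x z y 0 (by linarith) (by linarith) with h | h | h
        · exact Or.inl (segment_symm ℝ z y ▸ h)
        · exact Or.inr (Or.inr h)
        · exact Or.inr (Or.inl h)
      · -- t = (z.2 - x.2)/(y.2 - x.2)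
        have hz1 : z.1 = x.1 + ((z.2-x.2)/(y.2-x.2)) * (y.1 - x.1) := by
          have : (y.2 - x.2) * (z.1 - x.1) = 0 := by
            linear_combination -hdet + (z.2 - x.2) * hu1
          have hz1' : z.1 - x.1 = 0 := by
            rcases mul_eq_zero.mp this with h | h
            · exact absurd h hu2
            · exact h
          rw [hu1]; ring_nf; linarith
        have hz2 : z.2 = x.2 + ((z.2-x.2)/(y.2-x.2)) * (y.2 - x.2) := by
          field_simp
          ring
        exact rel_cases x y z _ hz1 hz2
    · have hz1 : z.1 = x.1 + ((z.1-x.1)/(y.1-x.1)) * (y.1 - x.1) := by field_simp; ring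
      have hz2 : z.2 = x.2 + ((z.1-x.1)/(y.1-x.1)) * (y.2 - x.2) := by
        field_simp
        linear_combination hdet
      exact rel_cases x y z _ hz1 hz2
  rcases hcases with h | h | h
  · have hxa : x ∈ A := hA.segment_subset hy.1 hz.1 h
    have : x ∈ A ∩ B ∩ C := ⟨⟨hxa, hx.1⟩, hx.2⟩
    rw [he] at this; exact this
  · have hzc : z ∈ C := hC.segment_subset hx.2 hy.2 h
    have : z ∈ A ∩ B ∩ C := ⟨⟨hz.1, hz.2⟩, hzc⟩
    rw [he] at this; exact this
  · have hyb : y ∈ B := hB.segment_subset hx.1 hz.2 h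
    have : y ∈ A ∩ B ∩ C := ⟨⟨hy.1, hyb⟩, hy.2⟩
    rw [he] at this; exact this

lemma sign_eq_aux {a b : ℝ} (h : ∀ t, 0 ≤ t → t ≤ 1 → (1-t)*a + t*b ≠ 0) :
    Real.sign a = Real.sign b := by
  have ha : a ≠ 0 := by have := h 0 le_rfl zero_le_one; simpa using this
  have hb : b ≠ 0 := by have := h 1 zero_le_one le_rfl; simpa using this
  rcases ha.lt_or_gt with ha' | ha' <;> rcases hb.lt_or_gt with hb' | hb'
  · rw [Real.sign_of_neg ha', Real.sign_of_neg hb']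
  · exfalso
    have hab : a - b < 0 := by linarith
    refine h (a/(a-b)) ?_ ?_ ?_
    · exact div_nonneg_iff.mpr (Or.inr ⟨ha'.le, hab.le⟩)
    · rw [div_le_one_of_neg hab]
      linarith
    · have hne : a - b ≠ 0 := ne_of_lt hab
      field_simp
      ring
  · exfalso
    have hab : a - b > 0 := by linarith
    refine h (a/(a-b)) ?_ ?_ ?_
    · exact div_nonneg ha'.le hab.le
    · rw [div_le_one hab]; linarith
    · have hne : a - b ≠ 0 := ne_of_gt hab
      field_simp
      ring
  · rw [Real.sign_of_pos ha', Real.sign_of_pos hb']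

lemma det2_affine1 (x x' y z : ℝ × ℝ) (t : ℝ) :
    det2 ((1-t) • x + t • x') y z = (1-t) * det2 x y z + t * det2 x' y z := by
  simp only [det2, Prod.fst_add, Prod.snd_add, Prod.smul_fst, Prod.smul_snd, smul_eq_mul]
  ring

lemma det2_affine2 (x y y' z : ℝ × ℝ) (t : ℝ) :
    det2 x ((1-t) • y + t • y') z = (1-t) * det2 x y z + t * det2 x y' z := by
  simp only [det2, Prod.fst_add, Prod.snd_add, Prod.smul_fst, Prod.smul_snd, smul_eq_mul]
  ring

lemma det2_affine3 (x y z z' : ℝ × ℝ) (t : ℝ) :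
    det2 x y ((1-t) • z + t • z') = (1-t) * det2 x y z + t * det2 x y z' := by
  simp only [det2, Prod.fst_add, Prod.snd_add, Prod.smul_fst, Prod.smul_snd, smul_eq_mul]
  ring

lemma orient_const {A B C : Set (ℝ × ℝ)} (hA : Convex ℝ A) (hB : Convex ℝ B)
    (hC : Convex ℝ C) (he : A ∩ B ∩ C = ∅) {x y z x' y' z' : ℝ × ℝ}
    (hx : x ∈ B ∩ C) (hy : y ∈ A ∩ C) (hz : z ∈ A ∩ B)
    (hx' : x' ∈ B ∩ C) (hy' : y' ∈ A ∩ C) (hz' : z' ∈ A ∩ B) :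
    ptOrient x y z = ptOrient x' y' z' := by
  have step1 : ptOrient x y z = ptOrient x' y z := by
    unfold ptOrient
    apply sign_eq_aux
    intro t ht0 ht1 h0
    have hp : (1-t) • x + t • x' ∈ B ∩ C :=
      ⟨hB hx.1 hx'.1 (by linarith) ht0 (by ring), hC hx.2 hx'.2 (by linarith) ht0 (by ring)⟩
    exact det2_ne_zero hA hB hC he hp hy hz (by rw [det2_affine1]; exact h0)
  have step2 : ptOrient x' y z = ptOrient x' y' z := by
    unfold ptOrient
    apply sign_eq_aux
    intro t ht0 ht1 h0
    have hp : (1-t) • y + t • y' ∈ A ∩ C :=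
      ⟨hA hy.1 hy'.1 (by linarith) ht0 (by ring), hC hy.2 hy'.2 (by linarith) ht0 (by ring)⟩
    exact det2_ne_zero hA hB hC he hx' hp hz (by rw [det2_affine2]; exact h0)
  have step3 : ptOrient x' y' z = ptOrient x' y' z' := by
    unfold ptOrient
    apply sign_eq_aux
    intro t ht0 ht1 h0
    have hp : (1-t) • z + t • z' ∈ A ∩ B :=
      ⟨hA hz.1 hz'.1 (by linarith) ht0 (by ring), hB hz.2 hz'.2 (by linarith) ht0 (by ring)⟩
    exact det2_ne_zero hA hB hC he hx' hy' hp (by rw [det2_affine3]; exact h0)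
  rw [step1, step2, step3]

theorem stmt_8 (A₁ A₂ B₁ B₂ C₁ C₂ : Set (ℝ × ℝ))
    (hcomp : ∀ S ∈ [A₁, A₂, B₁, B₂, C₁, C₂], IsCompact S)
    (hconv : ∀ S ∈ [A₁, A₂, B₁, B₂, C₁, C₂], Convex ℝ S)
    (hpair : ∀ S ∈ [A₁, A₂, B₁, B₂, C₁, C₂], ∀ T ∈ [A₁, A₂, B₁, B₂, C₁, C₂],
      (S ∩ T).Nonempty)
    (h1 : (A₁ ∩ A₂ ∩ B₁ ∩ B₂).Nonempty)
    (h2 : (A₁ ∩ A₂ ∩ C₁ ∩ C₂).Nonempty)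
    (h3 : (B₁ ∩ B₂ ∩ C₁ ∩ C₂).Nonempty)
    (e1 : A₁ ∩ B₁ ∩ C₁ = ∅) (e2 : A₂ ∩ B₂ ∩ C₂ = ∅) :
    ∀ x₁ ∈ B₁ ∩ C₁, ∀ y₁ ∈ A₁ ∩ C₁, ∀ z₁ ∈ A₁ ∩ B₁,
      ∀ x₂ ∈ B₂ ∩ C₂, ∀ y₂ ∈ A₂ ∩ C₂, ∀ z₂ ∈ A₂ ∩ B₂,
        ptOrient x₁ y₁ z₁ = ptOrient x₂ y₂ z₂ := by
  intro x₁ hx₁ y₁ hy₁ z₁ hz₁ x₂ hx₂ y₂ hy₂ z₂ hz₂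
  obtain ⟨zs, ⟨⟨hzA1, hzA2⟩, hzB1⟩, hzB2⟩ := h1
  obtain ⟨ys, ⟨⟨hyA1, hyA2⟩, hyC1⟩, hyC2⟩ := h2
  obtain ⟨xs, ⟨⟨hxB1, hxB2⟩, hxC1⟩, hxC2⟩ := h3
  have cA1 : Convex ℝ A₁ := hconv A₁ (by simp)
  have cA2 : Convex ℝ A₂ := hconv A₂ (by simp)
  have cB1 : Convex ℝ B₁ := hconv B₁ (by simp)
  have cB2 : Convex ℝ B₂ := hconv B₂ (by simp)
  have cC1 : Convex ℝ C₁ := hconv C₁ (by simp)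
  have cC2 : Convex ℝ C₂ := hconv C₂ (by simp)
  have e1' : ptOrient x₁ y₁ z₁ = ptOrient xs ys zs :=
    orient_const cA1 cB1 cC1 e1 hx₁ hy₁ hz₁ ⟨hxB1, hxC1⟩ ⟨hyA1, hyC1⟩ ⟨hzA1, hzB1⟩
  have e2' : ptOrient x₂ y₂ z₂ = ptOrient xs ys zs :=
    orient_const cA2 cB2 cC2 e2 hx₂ hy₂ hz₂ ⟨hxB2, hxC2⟩ ⟨hyA2, hyC2⟩ ⟨hzA2, hzB2⟩
  rw [e1', e2']
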